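/- Define the Hadamard (Fourier) transform over F₂ⁿ as the complex matrix H indexed by V × V with entries H(x,y) = 2^{−n/2} · (−1)^{⟨x,y⟩}, and for a submodule A of V define the subspace state |A⟩ = |A|^{−1/2} · ∑_{a ∈ A} e_a. Then for every submodule A of V: H · |A⟩ = |A^⊥⟩, i.e. applying the Hadamard transform to the uniform superposition over A produces the uniform superposition over A^⊥. -/

import Mathlib

open scoped BigOperators Kronecker Classical ComplexOrder

noncomputable section

/-- The vector space `F₂ⁿ`. -/
abbrev V (n : ℕ) : Type := Fin n → ZMod 2

/-- The standard bilinear pairing `⟨x,y⟩ = ∑ i, xᵢ * yᵢ` on `F₂ⁿ`. -/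
def pairing {n : ℕ} (x y : V n) : ZMod 2 := ∑ i, x i * y i

/-- `(−1)^b ∈ ℂ` for `b : ZMod 2`. -/
def sign (b : ZMod 2) : ℂ := if b = 0 then 1 else -1

lemma pairing_add_right {n : ℕ} (x y z : V n) :
    pairing x (y + z) = pairing x y + pairing x z := by
  simp [pairing, mul_add, Finset.sum_add_distrib]

lemma pairing_smul_right {n : ℕ} (c : ZMod 2) (x y : V n) :
    pairing x (c • y) = c * pairing x y := by
  simp only [pairing, Pi.smul_apply, smul_eq_mul, Finset.mul_sum]
  exact Finset.sum_congr rfl fun i _ => by ring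

/-- The orthogonal complement `A^⊥ = {y | ∀ a ∈ A, ⟨a,y⟩ = 0}`. -/
def perp {n : ℕ} (A : Submodule (ZMod 2) (V n)) : Submodule (ZMod 2) (V n) where
  carrier := {y | ∀ a ∈ A, pairing a y = 0}
  zero_mem' := by
    simp only [Set.mem_setOf_eq]
    intro a _
    simp [pairing]
  add_mem' := by
    intro y z hy hz
    simp only [Set.mem_setOf_eq] at *
    intro a ha
    rw [pairing_add_right, hy a ha, hz a ha, add_zero]
  smul_mem' := by
    intro c y hy
    simp only [Set.mem_setOf_eq] at *
    intro a ha
    rw [pairing_smul_right, hy a ha, mul_zero]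

/-- The coset `A + s = {a + s : a ∈ A}`. -/
def coset {n : ℕ} (A : Submodule (ZMod 2) (V n)) (s : V n) : Set (V n) :=
  {v | ∃ a ∈ A, v = a + s}

noncomputable instance {n : ℕ} (A : Submodule (ZMod 2) (V n)) : Fintype A :=
  Fintype.ofFinite _

/-- The coset state `|A_{s,s'}⟩ = |A|^{−1/2} ∑_{a ∈ A} (−1)^{⟨a,s'⟩} e_{a+s}`. -/
noncomputable def cosetState {n : ℕ} (A : Submodule (ZMod 2) (V n)) (s s' : V n) :
    EuclideanSpace ℂ (V n) :=
  ((Real.sqrt (Nat.card A) : ℂ))⁻¹ •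
    ∑ a : A, sign (pairing (a : V n) s') • EuclideanSpace.single ((a : V n) + s) (1 : ℂ)

/-- A family of orthogonal projections: each member is Hermitian and idempotent. -/
def IsProjFamily {ι m : Type*} [Fintype m] (P : ι → Matrix m m ℂ) : Prop :=
  ∀ p, (P p).IsHermitian ∧ P p * P p = P p

/-- Coset invariance of a family indexed by pairs `(s, s')`:
the value depends only on the pair of cosets `(A + s, A^⊥ + s')`. -/
def CosetInvariant {n : ℕ} {α : Type*} (A : Submodule (ZMod 2) (V n))
    (F : V n × V n → α) : Prop :=
  ∀ s₁ s₁' s₂ s₂' : V n, coset A s₁ = coset A s₂ →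
    coset (perp A) s₁' = coset (perp A) s₂' → F (s₁, s₁') = F (s₂, s₂')

/-- The rank-one matrix `|A_{s,s'}⟩⟨A_{s,s'}|`. -/
noncomputable def outer {n : ℕ} (A : Submodule (ZMod 2) (V n)) (s s' : V n) :
    Matrix (V n) (V n) ℂ :=
  Matrix.of fun x y => cosetState A s s' x * (starRingEnd ℂ) (cosetState A s s' y)

/-- `Π^A[P,Q] = 2^{−n} ∑_{s,s'} |A_{s,s'}⟩⟨A_{s,s'}| ⊗ P(s,s') ⊗ Q(s,s')`. -/
noncomputable def PiMat {n : ℕ} {I J : Type*} [Fintype I] [Fintype J]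
    (A : Submodule (ZMod 2) (V n)) (P : V n × V n → Matrix I I ℂ)
    (Q : V n × V n → Matrix J J ℂ) : Matrix (V n × I × J) (V n × I × J) ℂ :=
  ((2 : ℂ) ^ n)⁻¹ • ∑ s : V n, ∑ s' : V n, (outer A s s') ⊗ₖ (P (s, s') ⊗ₖ Q (s, s'))

/-- The `ℓ² → ℓ²` operator norm of a complex square matrix. -/
noncomputable def opNorm {m : Type*} [Fintype m] [DecidableEq m] (M : Matrix m m ℂ) : ℝ :=
  ‖Matrix.toEuclideanCLM (𝕜 := ℂ) M‖

/-- The Hadamard (Fourier) transform over `F₂ⁿ`: `H(x,y) = 2^{−n/2} (−1)^{⟨x,y⟩}`. -/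
noncomputable def Hmat (n : ℕ) : Matrix (V n) (V n) ℂ :=
  Matrix.of fun x y => ((Real.sqrt ((2 : ℝ) ^ n) : ℂ))⁻¹ * sign (pairing x y)

/-- The subspace state `|A⟩ = |A|^{−1/2} ∑_{a ∈ A} e_a`. -/
noncomputable def subspaceState {n : ℕ} (A : Submodule (ZMod 2) (V n)) :
    EuclideanSpace ℂ (V n) :=
  ((Real.sqrt (Nat.card A) : ℂ))⁻¹ • ∑ a : A, EuclideanSpace.single ((a : V n)) (1 : ℂ)


lemma pairing_comm' {n} (x y : V n) : pairing x y = pairing y x := by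
  simp [pairing, mul_comm]

lemma sign_add' (b c : ZMod 2) : sign (b + c) = sign b * sign c := by
  rcases (by decide : ∀ b : ZMod 2, b = 0 ∨ b = 1) b with rfl | rfl <;>
    rcases (by decide : ∀ b : ZMod 2, b = 0 ∨ b = 1) c with rfl | rfl <;>
    simp [sign, (by decide : (1:ZMod 2)+1 = 0)]

lemma pairing_add_left' {n} (x y z : V n) : pairing (x + y) z = pairing x z + pairing y z := by
  simp [pairing, add_mul, Finset.sum_add_distrib]

lemma pairing_single' {n} (i : Fin n) (a : V n) : pairing (Pi.single i 1) a = a i := by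
  simp [pairing, Pi.single_apply, Finset.sum_ite_eq']

lemma sign_zero' : sign 0 = 1 := rfl

lemma shift_sum' {n} (A : Submodule (ZMod 2) (V n)) (x : V n) (c : A) :
    ∑ a : A, sign (pairing ((a + c : A) : V n) x) = ∑ a : A, sign (pairing (a : V n) x) :=
  Fintype.sum_equiv (Equiv.addRight c)
    (fun a => sign (pairing ((a + c : A) : V n) x))
    (fun a => sign (pairing (a : V n) x)) (fun _ => rfl)

lemma char_sum' {n} (A : Submodule (ZMod 2) (V n)) (x : V n) :
    ∑ a : A, sign (pairing (a : V n) x) =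
      if ∀ a ∈ A, pairing a x = 0 then (Nat.card A : ℂ) else 0 := by
  split_ifs with h
  · rw [Finset.sum_congr rfl (fun a _ => by rw [h a a.2, sign_zero'])]
    simp [Nat.card_eq_fintype_card]
  · push_neg at h
    obtain ⟨a₀, ha₀, hne⟩ := h
    have h1 : pairing a₀ x = 1 := by
      have : ∀ b : ZMod 2, b ≠ 0 → b = 1 := by decide
      exact this _ hne
    have key := shift_sum' A x ⟨a₀, ha₀⟩
    have key2 : ∀ a : A, sign (pairing ((a + ⟨a₀, ha₀⟩ : A) : V n) x)
        = - sign (pairing (a : V n) x) := by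
      intro a
      rw [Submodule.coe_add, pairing_add_left', sign_add', h1]
      simp [sign]
    rw [Finset.sum_congr rfl (fun a _ => key2 a), Finset.sum_neg_distrib] at key
    have h2 : (2 : ℂ) * ∑ a : A, sign (pairing (a : V n) x) = 0 := by
      linear_combination - key
    simpa using h2

lemma full_sum' {n} (a : V n) :
    ∑ x : V n, sign (pairing a x) = if a = 0 then ((2:ℂ)^n) else 0 := by
  split_ifs with h
  · subst h
    have hp : ∀ x : V n, pairing 0 x = 0 := fun x => by simp [pairing]
    rw [Finset.sum_congr rfl (fun x _ => by rw [hp x, sign_zero'])]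
    simp [Finset.card_univ]
  · obtain ⟨i, hi⟩ := Function.ne_iff.mp h
    have h1 : pairing a (Pi.single i 1) = 1 := by
      rw [pairing_comm', pairing_single']
      revert hi; have : ∀ b : ZMod 2, b ≠ 0 → b = 1 := by decide
      exact fun hi => this _ (by simpa using hi)
    have shift : ∑ x : V n, sign (pairing a (x + Pi.single i 1))
        = ∑ x : V n, sign (pairing a x) :=
      Fintype.sum_equiv (Equiv.addRight (Pi.single i 1 : V n)) _ _ (fun _ => rfl)
    have key2 : ∀ x : V n, sign (pairing a (x + Pi.single i 1)) = - sign (pairing a x) := by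
      intro x
      rw [pairing_comm', pairing_add_left', sign_add', pairing_comm',
        pairing_comm' (Pi.single i 1), h1]
      simp [sign]
    rw [Finset.sum_congr rfl (fun x _ => key2 x), Finset.sum_neg_distrib] at shift
    have h2 : (2 : ℂ) * ∑ x : V n, sign (pairing a x) = 0 := by linear_combination - shift
    simpa using h2

lemma mem_perp_iff' {n} (A : Submodule (ZMod 2) (V n)) (x : V n) :
    x ∈ perp A ↔ ∀ a ∈ A, pairing a x = 0 := Iff.rfl

lemma card_mul_card' {n} (A : Submodule (ZMod 2) (V n)) :
    (Nat.card A : ℂ) * (Nat.card (perp A) : ℂ) = (2:ℂ)^n := by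
  have swap : ∑ x : V n, ∑ a : A, sign (pairing (a:V n) x)
      = ∑ a : A, ∑ x : V n, sign (pairing (a:V n) x) := Finset.sum_comm
  have lhs : ∑ x : V n, ∑ a : A, sign (pairing (a:V n) x)
      = (Nat.card A : ℂ) * (Nat.card (perp A) : ℂ) := by
    simp only [char_sum']
    have step : ∀ x : V n, (if ∀ a ∈ A, pairing a x = 0 then (Nat.card A:ℂ) else 0)
        = (Nat.card A:ℂ) * (if x ∈ perp A then 1 else 0) := by
      intro x; by_cases hx : x ∈ perp A
      · rw [if_pos hx, if_pos ((mem_perp_iff' A x).mp hx), mul_one]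
      · rw [if_neg hx, if_neg (fun h => hx ((mem_perp_iff' A x).mpr h)), mul_zero]
    rw [Finset.sum_congr rfl (fun x _ => step x), ← Finset.mul_sum, Finset.sum_boole]
    congr 1
    rw [Nat.card_eq_fintype_card]
    norm_cast
    exact (Fintype.card_of_subtype (Finset.filter (· ∈ perp A) Finset.univ) (by simp)).symm
  have rhs : ∑ a : A, ∑ x : V n, sign (pairing (a:V n) x) = (2:ℂ)^n := by
    simp only [full_sum']
    rw [Finset.sum_eq_single (⟨0, A.zero_mem⟩ : A)]
    · simp
    · intro b _ hb
      rw [if_neg]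
      exact fun hb0 => hb (Subtype.ext hb0)
    · intro habs; exact absurd (Finset.mem_univ _) habs
  rw [← lhs, swap, rhs]

lemma card_mul_card_nat' {n} (A : Submodule (ZMod 2) (V n)) :
    Nat.card A * Nat.card (perp A) = 2^n := by
  exact_mod_cast card_mul_card' A

lemma subspaceState_apply' {n} (B : Submodule (ZMod 2) (V n)) (x : V n) :
    subspaceState B x = ((Real.sqrt (Nat.card B) : ℂ))⁻¹ * (if x ∈ B then 1 else 0) := by
  simp only [subspaceState, PiLp.smul_apply, smul_eq_mul]
  congr 1
  rw [show (∑ a : B, EuclideanSpace.single ((a : V n)) (1:ℂ)) x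
      = ∑ a : B, (if x = (a:V n) then (1:ℂ) else 0) by
    rw [WithLp.ofLp_sum, Finset.sum_apply]
    exact Finset.sum_congr rfl fun a _ => EuclideanSpace.single_apply _ _ _]
  by_cases hx : x ∈ B
  · rw [if_pos hx, Finset.sum_eq_single (⟨x, hx⟩ : B)]
    · simp
    · intro b _ hb
      rw [if_neg]
      exact fun e => hb (Subtype.ext e.symm)
    · intro habs; exact absurd (Finset.mem_univ _) habs
  · rw [if_neg hx]
    apply Finset.sum_eq_zero
    intro b _
    rw [if_neg]
    exact fun e => hx (e ▸ b.2)

lemma real_scalar_id' (m a b : ℕ) (ha : 0 < a) (hb : 0 < b) (h : a * b = 2^m) :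
    (Real.sqrt ((2:ℝ)^m))⁻¹ * (Real.sqrt a)⁻¹ * a = (Real.sqrt b)⁻¹ := by
  have h2 : ((2:ℝ)^m) = (a:ℝ) * b := by exact_mod_cast h.symm
  rw [h2, Real.sqrt_mul (by positivity)]
  have hsa : (0:ℝ) < Real.sqrt a := Real.sqrt_pos.mpr (by positivity)
  have hsb : (0:ℝ) < Real.sqrt b := Real.sqrt_pos.mpr (by positivity)
  have haa : Real.sqrt a * Real.sqrt a = a := Real.mul_self_sqrt (by positivity)
  field_simp
  nlinarith [haa, hsa, hsb]

/-- Applying the Hadamard transform to the uniform superposition over `A` produces the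
uniform superposition over `A^⊥`. -/
theorem hadamard_mulVec_subspaceState
    {n : ℕ} (hn : 0 < n) (A : Submodule (ZMod 2) (V n)) :
    (Hmat n).mulVec (subspaceState A) = (subspaceState (perp A) : EuclideanSpace ℂ (V n)) := by
  funext x
  have hmv : (Hmat n).mulVec (subspaceState A) x
      = ∑ y : V n, Hmat n x y * subspaceState A y := rfl
  rw [hmv, subspaceState_apply' (perp A) x]
  have e1 : ∀ y : V n, Hmat n x y * subspaceState A y
      = (((Real.sqrt ((2:ℝ)^n)):ℂ))⁻¹ * (((Real.sqrt (Nat.card A)):ℂ))⁻¹ *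
        (if y ∈ A then sign (pairing x y) else 0) := by
    intro y
    rw [subspaceState_apply']
    simp only [Hmat, Matrix.of_apply]
    by_cases hy : y ∈ A <;> simp [hy] <;> ring
  rw [Finset.sum_congr rfl (fun y _ => e1 y), ← Finset.mul_sum]
  have e2 : ∑ y : V n, (if y ∈ A then sign (pairing x y) else 0)
      = ∑ a : A, sign (pairing (a : V n) x) := by
    rw [← Finset.sum_filter]
    rw [Finset.sum_subtype (p := fun y => y ∈ A) (Finset.filter (· ∈ A) Finset.univ) (by simp)
      (fun y => sign (pairing x y))]
    exact Finset.sum_congr rfl (fun a _ => by rw [pairing_comm'])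
  rw [e2, char_sum' A x]
  by_cases hx : x ∈ perp A
  · rw [if_pos hx, if_pos ((mem_perp_iff' A x).mp hx), mul_one]
    have ha : 0 < Nat.card A := Nat.card_pos
    have hb : 0 < Nat.card (perp A) := Nat.card_pos
    have hr := real_scalar_id' n (Nat.card A) (Nat.card (perp A)) ha hb (card_mul_card_nat' A)
    have hc := congrArg (Complex.ofReal) hr
    push_cast at hc ⊢
    exact_mod_cast hc
  · rw [if_neg hx, if_neg (fun h => hx ((mem_perp_iff' A x).mpr h)), mul_zero, mul_zero]
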